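/- For complex numbers z₁ = r₁·exp(i·θ₁) and z₂ = r₂·exp(i·θ₂) with r₁, r₂ > 0, θ₁, θ₂ ∈ ℝ and |θ₁ − θ₂| ≤ π, the squared Euclidean distance between the polar-coordinate vectors satisfies (r₁ − r₂)² + (θ₁ − θ₂)² ≤ (1 + π²/(4·r₁·r₂))·|z₁ − z₂|². -/

import Mathlib

/-- For complex numbers `z₁ = r₁·exp(i·θ₁)` and `z₂ = r₂·exp(i·θ₂)` with `r₁, r₂ > 0` and
`|θ₁ − θ₂| ≤ π`, the squared Euclidean distance between the polar-coordinate vectors satisfies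
`(r₁ − r₂)² + (θ₁ − θ₂)² ≤ (1 + π²/(4·r₁·r₂))·|z₁ − z₂|²`. -/
theorem polar_coord_dist_le (r₁ r₂ θ₁ θ₂ : ℝ) (hr₁ : 0 < r₁) (hr₂ : 0 < r₂)
    (hθ : |θ₁ - θ₂| ≤ Real.pi)
    (z₁ z₂ : ℂ) (hz₁ : z₁ = (r₁ : ℂ) * Complex.exp (θ₁ * Complex.I))
    (hz₂ : z₂ = (r₂ : ℂ) * Complex.exp (θ₂ * Complex.I)) :
    (r₁ - r₂) ^ 2 + (θ₁ - θ₂) ^ 2 ≤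
      (1 + Real.pi ^ 2 / (4 * r₁ * r₂)) * ‖z₁ - z₂‖ ^ 2 := by
  have hpi := Real.pi_pos
  set Δ := θ₁ - θ₂ with hΔ
  set s := Real.sin (Δ / 2) with hs
  -- squared norm formula
  have habs : ‖z₁ - z₂‖ ^ 2 = (r₁ - r₂) ^ 2 + 4 * r₁ * r₂ * s ^ 2 := by
    rw [Complex.sq_norm, hz₁, hz₂, Complex.normSq_apply]
    simp only [Complex.sub_re, Complex.sub_im, Complex.mul_re, Complex.mul_im,
      Complex.ofReal_re, Complex.ofReal_im, Complex.exp_ofReal_mul_I_re,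
      Complex.exp_ofReal_mul_I_im]
    have hcd : Real.cos Δ = Real.cos θ₁ * Real.cos θ₂ + Real.sin θ₁ * Real.sin θ₂ :=
      Real.cos_sub θ₁ θ₂
    have hhalf : Real.cos Δ = 1 - 2 * s ^ 2 := by
      have hpc := Real.sin_sq_add_cos_sq (Δ / 2)
      have h2m : Real.cos Δ = Real.cos (Δ / 2) ^ 2 - Real.sin (Δ / 2) ^ 2 := by
        rw [show Δ = 2 * (Δ / 2) by ring, Real.cos_two_mul']; ring_nf
      rw [hs]; linarith
    have hC : Real.cos θ₁ * Real.cos θ₂ + Real.sin θ₁ * Real.sin θ₂ = 1 - 2 * s ^ 2 := by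
      rw [← hcd, hhalf]
    have h1 := Real.sin_sq_add_cos_sq θ₁
    have h2 := Real.sin_sq_add_cos_sq θ₂
    linear_combination r₁ ^ 2 * h1 + r₂ ^ 2 * h2 - 2 * r₁ * r₂ * hC
  -- Jordan inequality
  have hjordan : Δ ^ 2 ≤ Real.pi ^ 2 * s ^ 2 := by
    have h1 : 2 / Real.pi * |Δ / 2| ≤ Real.sin |Δ / 2| := by
      apply Real.mul_le_sin (abs_nonneg _)
      rw [abs_div]
      simp only [abs_two]
      linarith [hθ]
    have h2 : Real.sin |Δ / 2| ≤ |s| := by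
      rcases abs_cases (Δ / 2) with ⟨h, _⟩ | ⟨h, _⟩
      · rw [h]; exact le_abs_self _
      · rw [h, Real.sin_neg, hs]; exact neg_le_abs _
    have h3 : 2 / Real.pi * |Δ / 2| ≤ |s| := le_trans h1 h2
    have h4 : |Δ| ≤ Real.pi * |s| := by
      rw [abs_div] at h3
      simp only [abs_two] at h3
      have h5 := mul_le_mul_of_nonneg_left h3 hpi.le
      have : Real.pi * (2 / Real.pi * (|Δ| / 2)) = |Δ| := by field_simp
      linarith [h5, this.symm.le, this.le]
    have h5 : |Δ| ^ 2 ≤ (Real.pi * |s|) ^ 2 := by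
      apply pow_le_pow_left₀ (abs_nonneg _) h4
    rw [sq_abs] at h5
    calc Δ ^ 2 ≤ (Real.pi * |s|) ^ 2 := h5
      _ = Real.pi ^ 2 * s ^ 2 := by rw [mul_pow, sq_abs]
  rw [habs]
  have hrr : 0 < 4 * r₁ * r₂ := by positivity
  have key : Real.pi ^ 2 / (4 * r₁ * r₂) * (4 * r₁ * r₂ * s ^ 2) = Real.pi ^ 2 * s ^ 2 := by
    field_simp
  have hc : 0 ≤ Real.pi ^ 2 / (4 * r₁ * r₂) := div_nonneg (sq_nonneg _) hrr.le
  rw [show (1 + Real.pi ^ 2 / (4 * r₁ * r₂)) * ((r₁ - r₂) ^ 2 + 4 * r₁ * r₂ * s ^ 2) =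
      (r₁ - r₂) ^ 2 + 4 * r₁ * r₂ * s ^ 2 + Real.pi ^ 2 / (4 * r₁ * r₂) * (r₁ - r₂) ^ 2 +
        Real.pi ^ 2 / (4 * r₁ * r₂) * (4 * r₁ * r₂ * s ^ 2) from by ring, key]
  clear_value Δ s
  linarith [mul_nonneg hc (sq_nonneg (r₁ - r₂)), mul_nonneg hrr.le (sq_nonneg s), hjordan]
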